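/- arXiv:2101.00971 — 3 statements merged into one kernel-verified Lean document; each statement's English description precedes it below -/
import Mathlib

section
/- The complete list of steady states (u₀,v₀,w₀) of the system with u₀v₀w₀ = 0 (assuming all relevant denominators nonzero and the coefficients generic, e.g. β₁, β₃, α₁, α₃ positive and β₁+κ₂α₂² ≠ 0, β₃+κ₁α₄² ≠ 0) consists of: (0,0,0), (0,1,0), (0,0,1), (1,0,0), ((β₁+α₂)/(β₁+κ₂α₂²), β₁(1−κ₂α₂)/(β₁+κ₂α₂²), 0), and (0, β₃(1−κ₁α₄)/(β₃+κ₁α₄²), (β₃+α₄)/(β₃+κ₁α₄²)). -/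
/-- Steady state: the three reaction terms of the rescaled system vanish. -/
def IsSteadyState (β₁ β₃ α₁ α₂ α₃ α₄ κ₁ κ₂ : ℝ) (u₀ v₀ w₀ : ℝ) : Prop :=
  β₁ * u₀ * (1 - u₀) - α₁ * u₀ * w₀ + α₂ * u₀ * v₀ = 0 ∧
  v₀ * (1 - v₀) + (κ₁ * α₃ + κ₂ * α₁) * u₀ * w₀
    - (κ₂ * α₂ * u₀ + κ₁ * α₄ * w₀) * v₀ = 0 ∧
  β₃ * w₀ * (1 - w₀) - α₃ * u₀ * w₀ + α₄ * v₀ * w₀ = 0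

theorem steady_states_with_zero_product
    (β₁ β₃ α₁ α₂ α₃ α₄ κ₁ κ₂ : ℝ)
    (hβ₁ : 0 < β₁) (hβ₃ : 0 < β₃)
    (hα₁ : 0 ≤ α₁) (hα₃ : 0 ≤ α₃) (hα : α₁ ^ 2 + α₃ ^ 2 ≠ 0)
    (hα₂ : 0 ≤ α₂) (hα₄ : 0 ≤ α₄)
    (hκ₁ : 0 < κ₁) (hκ₂ : 0 < κ₂)
    (hden₁ : β₁ + κ₂ * α₂ ^ 2 ≠ 0) (hden₂ : β₃ + κ₁ * α₄ ^ 2 ≠ 0) :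
    {p : ℝ × ℝ × ℝ |
        IsSteadyState β₁ β₃ α₁ α₂ α₃ α₄ κ₁ κ₂ p.1 p.2.1 p.2.2 ∧
        p.1 * p.2.1 * p.2.2 = 0} =
      {((0 : ℝ), (0 : ℝ), (0 : ℝ)), (0, 1, 0), (0, 0, 1), (1, 0, 0),
        ((β₁ + α₂) / (β₁ + κ₂ * α₂ ^ 2),
          β₁ * (1 - κ₂ * α₂) / (β₁ + κ₂ * α₂ ^ 2), 0),
        (0, β₃ * (1 - κ₁ * α₄) / (β₃ + κ₁ * α₄ ^ 2),
          (β₃ + α₄) / (β₃ + κ₁ * α₄ ^ 2))} := by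
  ext ⟨u, v, w⟩
  simp only [Set.mem_setOf_eq, Set.mem_insert_iff, Set.mem_singleton_iff,
    Prod.mk.injEq, IsSteadyState]
  constructor
  · rintro ⟨⟨e1, e2, e3⟩, hp⟩
    rcases mul_eq_zero.mp hp with h | hw
    · rcases mul_eq_zero.mp h with hu | hv
      · -- u = 0
        subst hu
        by_cases hv : v = 0
        · subst hv
          by_cases hw : w = 0
          · exact Or.inl ⟨rfl, rfl, hw⟩
          · -- β₃ w (1 - w) = 0
            have h3 : (β₃ * w) * (1 - w) = 0 := by linear_combination e3
            rcases mul_eq_zero.mp h3 with h | h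
            · rcases mul_eq_zero.mp h with h | h
              · exact absurd h hβ₃.ne'
              · exact absurd h hw
            · exact Or.inr (Or.inr (Or.inl ⟨rfl, rfl, by linarith⟩))
        · by_cases hw : w = 0
          · subst hw
            have h2 : v * (1 - v) = 0 := by linear_combination e2
            rcases mul_eq_zero.mp h2 with h | h
            · exact absurd h hv
            · exact Or.inr (Or.inl ⟨rfl, by linarith, rfl⟩)
          · -- v ≠ 0, w ≠ 0
            have h2 : v * (1 - v - κ₁ * α₄ * w) = 0 := by linear_combination e2
            have h2' : 1 - v - κ₁ * α₄ * w = 0 :=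
              (mul_eq_zero.mp h2).resolve_left hv
            have h3 : w * (β₃ * (1 - w) + α₄ * v) = 0 := by linear_combination e3
            have h3' : β₃ * (1 - w) + α₄ * v = 0 :=
              (mul_eq_zero.mp h3).resolve_left hw
            refine Or.inr (Or.inr (Or.inr (Or.inr (Or.inr ⟨rfl, ?_, ?_⟩))))
            · rw [eq_div_iff hden₂]; linear_combination -β₃ * h2' + κ₁ * α₄ * h3'
            · rw [eq_div_iff hden₂]; linear_combination -h3' - α₄ * h2'
      · -- v = 0
        subst hv
        by_cases hu : u = 0
        · subst hu
          by_cases hw : w = 0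
          · exact Or.inl ⟨rfl, rfl, hw⟩
          · have h3 : (β₃ * w) * (1 - w) = 0 := by linear_combination e3
            rcases mul_eq_zero.mp h3 with h | h
            · rcases mul_eq_zero.mp h with h | h
              · exact absurd h hβ₃.ne'
              · exact absurd h hw
            · exact Or.inr (Or.inr (Or.inl ⟨rfl, rfl, by linarith⟩))
        · have hcoef : κ₁ * α₃ + κ₂ * α₁ ≠ 0 := by
            intro h
            have h1 : α₁ = 0 := by nlinarith
            have h3 : α₃ = 0 := by nlinarith
            exact hα (by rw [h1, h3]; ring)
          have h2 : (κ₁ * α₃ + κ₂ * α₁) * u * w = 0 := by linear_combination e2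
          have hw : w = 0 := by
            rcases mul_eq_zero.mp h2 with h | h
            · rcases mul_eq_zero.mp h with h | h
              · exact absurd h hcoef
              · exact absurd h hu
            · exact h
          subst hw
          have h1 : (β₁ * u) * (1 - u) = 0 := by linear_combination e1
          rcases mul_eq_zero.mp h1 with h | h
          · rcases mul_eq_zero.mp h with h | h
            · exact absurd h hβ₁.ne'
            · exact absurd h hu
          · exact Or.inr (Or.inr (Or.inr (Or.inl ⟨by linarith, rfl, rfl⟩)))
    · -- w = 0
      subst hw
      by_cases hu : u = 0
      · subst hu
        by_cases hv : v = 0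
        · exact Or.inl ⟨rfl, hv, rfl⟩
        · have h2 : v * (1 - v) = 0 := by linear_combination e2
          have h := (mul_eq_zero.mp h2).resolve_left hv
          exact Or.inr (Or.inl ⟨rfl, by linarith, rfl⟩)
      · by_cases hv : v = 0
        · subst hv
          have h1 : (β₁ * u) * (1 - u) = 0 := by linear_combination e1
          rcases mul_eq_zero.mp h1 with h | h
          · rcases mul_eq_zero.mp h with h | h
            · exact absurd h hβ₁.ne'
            · exact absurd h hu
          · exact Or.inr (Or.inr (Or.inr (Or.inl ⟨by linarith, rfl, rfl⟩)))
        · have h1 : u * (β₁ * (1 - u) + α₂ * v) = 0 := by linear_combination e1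
          have h1' : β₁ * (1 - u) + α₂ * v = 0 :=
            (mul_eq_zero.mp h1).resolve_left hu
          have h2 : v * (1 - v - κ₂ * α₂ * u) = 0 := by linear_combination e2
          have h2' : 1 - v - κ₂ * α₂ * u = 0 :=
            (mul_eq_zero.mp h2).resolve_left hv
          refine Or.inr (Or.inr (Or.inr (Or.inr (Or.inl ⟨?_, ?_, rfl⟩))))
          · rw [eq_div_iff hden₁]; linear_combination -h1' - α₂ * h2'
          · rw [eq_div_iff hden₁]; linear_combination -β₁ * h2' + κ₂ * α₂ * h1'
  · rintro (⟨rfl, rfl, rfl⟩ | ⟨rfl, rfl, rfl⟩ | ⟨rfl, rfl, rfl⟩ | ⟨rfl, rfl, rfl⟩ |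
      ⟨rfl, rfl, rfl⟩ | ⟨rfl, rfl, rfl⟩)
    · norm_num
    · norm_num
    · norm_num
    · norm_num
    · refine ⟨⟨?_, ?_, ?_⟩, ?_⟩ <;> field_simp <;> ring
    · refine ⟨⟨?_, ?_, ?_⟩, ?_⟩ <;> field_simp <;> ring
end

section
/- Let μ, d₁, d₃, α₂, α₄ be reals with the remaining coefficients defined by β₁ = 2α₂²(α₄+(2μ−5)d₃)/((10d₁−μ+2α₂)α₄) + 24d₁ − α₂, α₁ = 16d₁ − 4μ + β₁, α₃ = d₃β₁/(3d₁), κ₁ = (5−2μ)/α₄, κ₂ = β₁(α₂+β₁−24d₁)/(24d₁α₂²), β₃ = (2(2d₃−μ)α₂ + (β₁−24d₁)α₄)/α₂ (assume all denominators nonzero). Then u(t,x) = (6d₁/β₁)(1−tanh(x−μt))², v(t,x) = ((24d₁−β₁)/(2α₂))(1−tanh(x−μt)), w(t,x) = ½ + ½tanh(x−μt) is an exact solution of the system u_t = d₁u_xx + β₁u(1−u) − α₁uw + α₂uv, v_t = v_xx + v(1−v) + (κ₁α₃+κ₂α₁)uw − (κ₂α₂u+κ₁α₄w)v, w_t = d₃w_xx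 + β₃w(1−w) − α₃uw + α₄vw. -/
open Real

noncomputable def pdt (f : ℝ → ℝ → ℝ) (t x : ℝ) : ℝ := deriv (fun s => f s x) t

noncomputable def pdxx (f : ℝ → ℝ → ℝ) (t x : ℝ) : ℝ := deriv (deriv (f t)) x

/-- The rescaled language-competition system (1-4). -/
def LangSys (d₁ d₃ β₁ β₃ α₁ α₂ α₃ α₄ κ₁ κ₂ : ℝ) (u v w : ℝ → ℝ → ℝ) : Prop :=
  ∀ t x : ℝ,
    pdt u t x = d₁ * pdxx u t x + β₁ * u t x * (1 - u t x)
        - α₁ * u t x * w t x + α₂ * u t x * v t x ∧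
    pdt v t x = pdxx v t x + v t x * (1 - v t x)
        + (κ₁ * α₃ + κ₂ * α₁) * u t x * w t x
        - (κ₂ * α₂ * u t x + κ₁ * α₄ * w t x) * v t x ∧
    pdt w t x = d₃ * pdxx w t x + β₃ * w t x * (1 - w t x)
        - α₃ * u t x * w t x + α₄ * v t x * w t x

lemma tanh_hasDerivAt (y : ℝ) : HasDerivAt Real.tanh (1 - Real.tanh y ^ 2) y := by
  have h := (Real.hasDerivAt_sinh y).div (Real.hasDerivAt_cosh y) (Real.cosh_pos y).ne'
  have e : (Real.cosh y * Real.cosh y - Real.sinh y * Real.sinh y) / Real.cosh y ^ 2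
      = 1 - Real.tanh y ^ 2 := by
    rw [Real.tanh_eq_sinh_div_cosh]
    have := Real.cosh_sq_sub_sinh_sq y
    field_simp
  rw [e] at h
  exact h.congr_of_eventuallyEq (Filter.Eventually.of_forall fun z => Real.tanh_eq_sinh_div_cosh z)

lemma Hx (a x : ℝ) : HasDerivAt (fun y : ℝ => Real.tanh (y - a)) (1 - Real.tanh (x - a) ^ 2) x := by
  exact ((tanh_hasDerivAt (x - a)).comp x ((hasDerivAt_id x).sub_const a)).congr_deriv (mul_one _)

lemma Ht (μ x t : ℝ) : HasDerivAt (fun s : ℝ => Real.tanh (x - μ * s))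
    (μ * (Real.tanh (x - μ * t) ^ 2 - 1)) t := by
  have h1 : HasDerivAt (fun s : ℝ => x - μ * s) (-μ) t := by
    simpa using ((hasDerivAt_id t).const_mul μ).const_sub x
  have := (tanh_hasDerivAt (x - μ * t)).comp t h1
  refine this.congr_deriv ?_; ring

-- pdt / pdxx values
lemma d_u_t (c μ x t : ℝ) :
    deriv (fun s : ℝ => c * (1 - Real.tanh (x - μ * s)) ^ 2) t
      = c * (2 * (1 - Real.tanh (x - μ * t)) * (μ * (1 - Real.tanh (x - μ * t) ^ 2))) := by
  have h := (((Ht μ x t).const_sub 1).pow 2).const_mul c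
  refine h.deriv.trans ?_
  push_cast; ring

lemma d_u_x (c a : ℝ) :
    deriv (fun y : ℝ => c * (1 - Real.tanh (y - a)) ^ 2)
      = fun y => c * (2 * (1 - Real.tanh (y - a)) * (Real.tanh (y - a) ^ 2 - 1)) := by
  funext y
  have h := (((Hx a y).const_sub 1).pow 2).const_mul c
  refine h.deriv.trans ?_
  push_cast; ring

lemma d_u_xx (c a x : ℝ) :
    deriv (fun y : ℝ => c * (2 * (1 - Real.tanh (y - a)) * (Real.tanh (y - a) ^ 2 - 1))) x
      = c * (2 * (1 - Real.tanh (x - a) ^ 2) *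
          ((1 - Real.tanh (x - a) ^ 2) + 2 * Real.tanh (x - a) * (1 - Real.tanh (x - a)))) := by
  have h1 : HasDerivAt (fun y : ℝ => 2 * (1 - Real.tanh (y - a)))
      (2 * (-(1 - Real.tanh (x - a) ^ 2))) x := ((Hx a x).const_sub 1).const_mul 2
  have h2 : HasDerivAt (fun y : ℝ => Real.tanh (y - a) ^ 2 - 1)
      (2 * Real.tanh (x - a) ^ 1 * (1 - Real.tanh (x - a) ^ 2)) x := by
    simpa using ((Hx a x).pow 2).sub_const 1
  have h := (h1.mul h2).const_mul c
  refine h.deriv.trans ?_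
  push_cast; ring

lemma d_v_t (k μ x t : ℝ) :
    deriv (fun s : ℝ => k * (1 - Real.tanh (x - μ * s))) t
      = k * (μ * (1 - Real.tanh (x - μ * t) ^ 2)) := by
  have h := ((Ht μ x t).const_sub 1).const_mul k
  convert h.deriv using 1 <;> ring

lemma d_v_x (k a : ℝ) :
    deriv (fun y : ℝ => k * (1 - Real.tanh (y - a)))
      = fun y => k * (Real.tanh (y - a) ^ 2 - 1) := by
  funext y
  have h := ((Hx a y).const_sub 1).const_mul k
  convert h.deriv using 1 <;> ring

lemma d_v_xx (k a x : ℝ) :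
    deriv (fun y : ℝ => k * (Real.tanh (y - a) ^ 2 - 1)) x
      = k * (2 * Real.tanh (x - a) * (1 - Real.tanh (x - a) ^ 2)) := by
  have h := (((Hx a x).pow 2).sub_const 1).const_mul k
  refine h.deriv.trans ?_
  push_cast; ring

lemma d_w_t (μ x t : ℝ) :
    deriv (fun s : ℝ => 1 / 2 + 1 / 2 * Real.tanh (x - μ * s)) t
      = 1 / 2 * (μ * (Real.tanh (x - μ * t) ^ 2 - 1)) := by
  have h := ((Ht μ x t).const_mul (1 / 2)).const_add (1 / 2)
  convert h.deriv using 1 <;> ring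

lemma d_w_x (a : ℝ) :
    deriv (fun y : ℝ => 1 / 2 + 1 / 2 * Real.tanh (y - a))
      = fun y => 1 / 2 * (1 - Real.tanh (y - a) ^ 2) := by
  funext y
  have h := ((Hx a y).const_mul (1 / 2)).const_add (1 / 2)
  convert h.deriv using 1 <;> ring

lemma d_w_xx (a x : ℝ) :
    deriv (fun y : ℝ => 1 / 2 * (1 - Real.tanh (y - a) ^ 2)) x
      = 1 / 2 * (-(2 * Real.tanh (x - a) * (1 - Real.tanh (x - a) ^ 2))) := by
  have h := (((Hx a x).pow 2).const_sub 1).const_mul (1 / 2)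
  refine h.deriv.trans ?_
  push_cast; ring


set_option maxHeartbeats 1000000 in
theorem exact_solution_2_4
    (μ d₁ d₃ α₂ α₄ β₁ α₁ α₃ κ₁ κ₂ β₃ : ℝ)
    (hd₁ : d₁ ≠ 0) (hβ₁ : β₁ ≠ 0) (hα₂ : α₂ ≠ 0) (hα₄ : α₄ ≠ 0)
    (hF : 10 * d₁ - μ + 2 * α₂ ≠ 0)
    (hβ₁def : β₁ = 2 * α₂ ^ 2 * (α₄ + (2 * μ - 5) * d₃) /
        ((10 * d₁ - μ + 2 * α₂) * α₄) + 24 * d₁ - α₂)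
    (hα₁def : α₁ = 16 * d₁ - 4 * μ + β₁)
    (hα₃def : α₃ = d₃ * β₁ / (3 * d₁))
    (hκ₁def : κ₁ = (5 - 2 * μ) / α₄)
    (hκ₂def : κ₂ = β₁ * (α₂ + β₁ - 24 * d₁) / (24 * d₁ * α₂ ^ 2))
    (hβ₃def : β₃ = (2 * (2 * d₃ - μ) * α₂ + (β₁ - 24 * d₁) * α₄) / α₂) :
    LangSys d₁ d₃ β₁ β₃ α₁ α₂ α₃ α₄ κ₁ κ₂
      (fun t x => 6 * d₁ / β₁ * (1 - Real.tanh (x - μ * t)) ^ 2)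
      (fun t x => (24 * d₁ - β₁) / (2 * α₂) * (1 - Real.tanh (x - μ * t)))
      (fun t x => 1 / 2 + 1 / 2 * Real.tanh (x - μ * t)) := by
  have hrel : (β₁ - 24 * d₁ + α₂) * ((10 * d₁ - μ + 2 * α₂) * α₄)
      = 2 * α₂ ^ 2 * (α₄ + (2 * μ - 5) * d₃) := by
    field_simp at hβ₁def
    linarith
  intro t x
  refine ⟨?_, ?_, ?_⟩
  · simp only [pdt, pdxx]
    rw [d_u_t, d_u_x, d_u_xx]
    rw [hα₁def]
    field_simp
    ring
  · simp only [pdt, pdxx]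
    rw [d_v_t, d_v_x, d_v_xx]
    rw [hα₁def, hα₃def, hκ₁def, hκ₂def]
    generalize Real.tanh (x - μ * t) = T
    field_simp
    linear_combination (144 * (T + T ^ 2 - T ^ 3 - 1)) * hrel
  · simp only [pdt, pdxx]
    rw [d_w_t, d_w_x, d_w_xx]
    rw [hα₃def, hβ₃def]
    field_simp
    ring
end

section
/- Let β₁, α₂, α₃, α₄, κ₂ be reals and set d₁ = 1, d₃ = 1, α₁ = β₁ − 24, κ₁ = (24α₂κ₂ + 23β₁ − (β₁−24+24α₂)β₁κ₂)/((α₃−α₄)β₁ + (α₃+α₄β₁κ₂)α₂), β₃ = ((α₃−α₄−24)β₁ − 24κ₂α₂² + (α₃+α₄β₁κ₂)α₂)/(β₁+κ₂α₂²) (assume all denominators nonzero). Then u(t,x) = ((β₁+α₂)/(4(β₁+κ₂α₂²)))(1−tanh(x−10t))², v(t,x) = (β₁(1−κ₂α₂)/(4(β₁+κ₂α₂²)))(1−tanh(x−10t))², w(t,x) = 1 − ¼(1−tanh(x−10t))² is an exact solution of the system u_t = d₁u_xx + β₁u(1−u) − α₁uw + α₂uv, v_t = v_xx + v(1−v) +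 (κ₁α₃+κ₂α₁)uw − (κ₂α₂u+κ₁α₄w)v, w_t = d₃w_xx + β₃w(1−w) − α₃uw + α₄vw. -/
open Real

lemma hasDerivAt_tanh' (x : ℝ) : HasDerivAt Real.tanh (1 - Real.tanh x ^ 2) x := by
  have hc : Real.cosh x ≠ 0 := (Real.cosh_pos x).ne'
  have h := (Real.hasDerivAt_sinh x).div (Real.hasDerivAt_cosh x) hc
  have he : Real.tanh = fun y => Real.sinh y / Real.cosh y :=
    funext fun y => Real.tanh_eq_sinh_div_cosh y
  rw [he]
  refine h.congr_deriv ?_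
  have hsq : Real.cosh x ^ 2 = 1 + Real.sinh x ^ 2 := Real.cosh_sq' x
  show _ = 1 - (Real.sinh x / Real.cosh x) ^ 2
  field_simp

lemma pdt_sol (A B t x : ℝ) :
    pdt (fun t x => B + A * (1 - Real.tanh (x - 10 * t)) ^ 2) t x
      = 20 * A * (1 - Real.tanh (x - 10 * t)) * (1 - Real.tanh (x - 10 * t) ^ 2) := by
  have h1 : HasDerivAt (fun s : ℝ => x - 10 * s) (-10) t := by
    simpa using ((hasDerivAt_id t).const_mul 10).const_sub x
  have h2 : HasDerivAt (fun s : ℝ => Real.tanh (x - 10 * s))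
      ((1 - Real.tanh (x - 10 * t) ^ 2) * (-10)) t :=
    HasDerivAt.comp (h₂ := Real.tanh) t (hasDerivAt_tanh' (x - 10 * t)) h1
  have h3 : HasDerivAt (fun s : ℝ => B + A * (1 - Real.tanh (x - 10 * s)) ^ 2)
      (A * (2 * (1 - Real.tanh (x - 10 * t)) ^ 1 * (0 - (1 - Real.tanh (x - 10 * t) ^ 2) * (-10)))) t := by
    exact (((hasDerivAt_const t (1:ℝ)).sub h2).pow 2).const_mul A |>.const_add B
  have := h3.deriv
  unfold pdt
  rw [this]; ring

lemma pdx_sol (A B t x : ℝ) :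
    deriv (fun x => B + A * (1 - Real.tanh (x - 10 * t)) ^ 2) x
      = -2 * A * (1 - Real.tanh (x - 10 * t)) * (1 - Real.tanh (x - 10 * t) ^ 2) := by
  have h1 : HasDerivAt (fun y : ℝ => y - 10 * t) 1 x := by
    simpa using (hasDerivAt_id x).sub_const (10 * t)
  have h2 : HasDerivAt (fun y : ℝ => Real.tanh (y - 10 * t))
      ((1 - Real.tanh (x - 10 * t) ^ 2) * 1) x :=
    HasDerivAt.comp (h₂ := Real.tanh) x (hasDerivAt_tanh' (x - 10 * t)) h1
  have h3 : HasDerivAt (fun y : ℝ => B + A * (1 - Real.tanh (y - 10 * t)) ^ 2)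
      (A * (2 * (1 - Real.tanh (x - 10 * t)) ^ 1 * (0 - (1 - Real.tanh (x - 10 * t) ^ 2) * 1))) x :=
    (((hasDerivAt_const x (1:ℝ)).sub h2).pow 2).const_mul A |>.const_add B
  rw [h3.deriv]; ring

lemma pdxx_sol (A B t x : ℝ) :
    pdxx (fun t x => B + A * (1 - Real.tanh (x - 10 * t)) ^ 2) t x
      = 2 * A * (1 - Real.tanh (x - 10 * t)) * (1 + 3 * Real.tanh (x - 10 * t))
          * (1 - Real.tanh (x - 10 * t) ^ 2) := by
  unfold pdxx
  have hfe : deriv (fun x => B + A * (1 - Real.tanh (x - 10 * t)) ^ 2)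
      = fun x => -2 * A * (1 - Real.tanh (x - 10 * t)) * (1 - Real.tanh (x - 10 * t) ^ 2) :=
    funext fun y => pdx_sol A B t y
  rw [hfe]
  have h1 : HasDerivAt (fun y : ℝ => y - 10 * t) 1 x := by
    simpa using (hasDerivAt_id x).sub_const (10 * t)
  have h2 : HasDerivAt (fun y : ℝ => Real.tanh (y - 10 * t))
      ((1 - Real.tanh (x - 10 * t) ^ 2) * 1) x :=
    HasDerivAt.comp (h₂ := Real.tanh) x (hasDerivAt_tanh' (x - 10 * t)) h1
  set T := Real.tanh (x - 10 * t) with hT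
  have h3 : HasDerivAt (fun y : ℝ => -2 * A * (1 - Real.tanh (y - 10 * t)) * (1 - Real.tanh (y - 10 * t) ^ 2))
      ((-2 * A * (0 - (1 - T ^ 2) * 1)) * (1 - T ^ 2)
        + (-2 * A * (1 - T)) * (0 - 2 * T ^ 1 * ((1 - T ^ 2) * 1))) x := by
    exact (((hasDerivAt_const x (1:ℝ)).sub h2).const_mul (-2 * A)).mul
      ((hasDerivAt_const x (1:ℝ)).sub (h2.pow 2))
  rw [h3.deriv]; ring

set_option maxHeartbeats 2000000 in
theorem exact_solution_2_6
    (β₁ α₂ α₃ α₄ κ₂ d₁ d₃ α₁ κ₁ β₃ : ℝ)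
    (hden₁ : β₁ + κ₂ * α₂ ^ 2 ≠ 0)
    (hden₂ : (α₃ - α₄) * β₁ + (α₃ + α₄ * β₁ * κ₂) * α₂ ≠ 0)
    (hd₁ : d₁ = 1) (hd₃ : d₃ = 1)
    (hα₁ : α₁ = β₁ - 24)
    (hκ₁ : κ₁ = (24 * α₂ * κ₂ + 23 * β₁ - (β₁ - 24 + 24 * α₂) * β₁ * κ₂) /
        ((α₃ - α₄) * β₁ + (α₃ + α₄ * β₁ * κ₂) * α₂))
    (hβ₃ : β₃ = ((α₃ - α₄ - 24) * β₁ - 24 * κ₂ * α₂ ^ 2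
        + (α₃ + α₄ * β₁ * κ₂) * α₂) / (β₁ + κ₂ * α₂ ^ 2)) :
    LangSys d₁ d₃ β₁ β₃ α₁ α₂ α₃ α₄ κ₁ κ₂
      (fun t x => (β₁ + α₂) / (4 * (β₁ + κ₂ * α₂ ^ 2)) *
          (1 - Real.tanh (x - 10 * t)) ^ 2)
      (fun t x => β₁ * (1 - κ₂ * α₂) / (4 * (β₁ + κ₂ * α₂ ^ 2)) *
          (1 - Real.tanh (x - 10 * t)) ^ 2)
      (fun t x => 1 - 1 / 4 * (1 - Real.tanh (x - 10 * t)) ^ 2) := by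
  intro t x
  set A₁ := (β₁ + α₂) / (4 * (β₁ + κ₂ * α₂ ^ 2)) with hA₁
  set A₂ := β₁ * (1 - κ₂ * α₂) / (4 * (β₁ + κ₂ * α₂ ^ 2)) with hA₂
  have hu : (fun t x : ℝ => A₁ * (1 - Real.tanh (x - 10 * t)) ^ 2)
      = fun t x : ℝ => (0 : ℝ) + A₁ * (1 - Real.tanh (x - 10 * t)) ^ 2 := by
    funext t x; ring
  have hv : (fun t x : ℝ => A₂ * (1 - Real.tanh (x - 10 * t)) ^ 2)
      = fun t x : ℝ => (0 : ℝ) + A₂ * (1 - Real.tanh (x - 10 * t)) ^ 2 := by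
    funext t x; ring
  have hw : (fun t x : ℝ => 1 - 1 / 4 * (1 - Real.tanh (x - 10 * t)) ^ 2)
      = fun t x : ℝ => (1 : ℝ) + (-(1/4)) * (1 - Real.tanh (x - 10 * t)) ^ 2 := by
    funext t x; ring
  have h4 : β₁ * 4 + α₂ ^ 2 * κ₂ * 4 ≠ 0 := by
    intro h; apply hden₁; linarith
  have h4' : (4:ℝ) * (β₁ + κ₂ * α₂ ^ 2) ≠ 0 := by
    intro h; apply hden₁; linarith
  set T := Real.tanh (x - 10 * t) with hT
  have h5 : β₁ + α₂ ^ 2 * κ₂ ≠ 0 := by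
    intro h; apply hden₁; linarith
  have h6 : β₁ * (α₃ - α₄) + α₂ * (α₃ + β₁ * κ₂ * α₄) ≠ 0 := by
    intro h; apply hden₂; linarith
  refine ⟨?_, ?_, ?_⟩
  · show pdt (fun t x => A₁ * (1 - Real.tanh (x - 10 * t)) ^ 2) t x = _
    rw [hu, pdt_sol, hw, show d₁ * pdxx (fun t x : ℝ => (0:ℝ) + A₁ * (1 - Real.tanh (x - 10*t))^2) t x = d₁ * (2 * A₁ * (1 - T) * (1 + 3 * T) * (1 - T ^ 2)) from by rw [pdxx_sol]]
    simp only
    rw [hA₁, hA₂, hd₁, hα₁, ← hT]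
    field_simp
    ring
  · show pdt (fun t x => A₂ * (1 - Real.tanh (x - 10 * t)) ^ 2) t x = _
    rw [hv, pdt_sol, hw, show pdxx (fun t x : ℝ => (0:ℝ) + A₂ * (1 - Real.tanh (x - 10*t))^2) t x = 2 * A₂ * (1 - T) * (1 + 3 * T) * (1 - T ^ 2) from by rw [pdxx_sol]]
    simp only
    rw [hA₁, hA₂, hκ₁, hα₁, ← hT]
    field_simp
    ring
  · show pdt (fun t x => 1 - 1/4 * (1 - Real.tanh (x - 10 * t)) ^ 2) t x = _
    rw [hw, pdt_sol, show d₃ * pdxx (fun t x : ℝ => (1:ℝ) + (-(1/4)) * (1 - Real.tanh (x - 10*t))^2) t x = d₃ * (2 * (-(1/4)) * (1 - T) * (1 + 3 * T) * (1 - T ^ 2)) from by rw [pdxx_sol]]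
    simp only
    rw [hA₁, hA₂, hβ₃, hd₃, ← hT]
    field_simp
    ring
end
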